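/- Let g be a finite-dimensional Lie algebra with an inner CPA-structure x·y = [φ(x),y] where φ : g → g is a nilpotent Lie algebra endomorphism. Then g^∞ · g = 0, where g^∞ = ⋂_{i} g^i is the intersection of the lower central series. -/

import Mathlib

/-- Powers of (the linear map underlying) a Lie algebra endomorphism preserve brackets. -/
lemma cpa_pow_map_lie (K : Type*) [Field K] (L : Type*) [LieRing L] [LieAlgebra K L]
    (φ : L →ₗ⁅K⁆ L) :
    ∀ (k : ℕ) (a b : L), ((φ : L →ₗ[K] L) ^ k) ⁅a, b⁆ =
      ⁅((φ : L →ₗ[K] L) ^ k) a, ((φ : L →ₗ[K] L) ^ k) b⁆ := by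
  intro k
  induction k with
  | zero => intro a b; simp
  | succ k ih =>
    intro a b
    have h : ∀ z : L, ((φ : L →ₗ[K] L) ^ (k + 1)) z = φ (((φ : L →ₗ[K] L) ^ k) z) := by
      intro z; rw [pow_succ', Module.End.mul_apply]; rfl
    rw [h, h, h, ih, φ.map_lie]

/-- Iterated sign-flip: `⁅φ^k x, y⁆ = (-1)^k • ⁅x, φ^k y⁆` follows from the base case. -/
lemma cpa_pow_flip (K : Type*) [Field K] (L : Type*) [LieRing L] [LieAlgebra K L]
    (φ : L →ₗ⁅K⁆ L)
    (hbase : ∀ x y : L, ⁅φ x, y⁆ = -⁅x, φ y⁆) :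
    ∀ (k : ℕ) (x y : L), ⁅((φ : L →ₗ[K] L) ^ k) x, y⁆ =
      ((-1 : ℤ) ^ k) • ⁅x, ((φ : L →ₗ[K] L) ^ k) y⁆ := by
  intro k
  induction k with
  | zero => intro x y; simp
  | succ k ih =>
    intro x y
    have h1 : ((φ : L →ₗ[K] L) ^ (k + 1)) x = φ (((φ : L →ₗ[K] L) ^ k) x) := by
      rw [pow_succ', Module.End.mul_apply]; rfl
    have h2 : ((φ : L →ₗ[K] L) ^ (k + 1)) y = ((φ : L →ₗ[K] L) ^ k) (φ y) := by
      rw [pow_succ, Module.End.mul_apply]; rfl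
    rw [h1, hbase, ih, h2, pow_succ]
    simp [mul_smul]

/-- The key commutator formula: for `x` in the `n`-th term of the lower central series,
`⁅φ x, y⁆ = -⁅x, φ^(2^(n+1)-1) y⁆`. -/
lemma cpa_lcs_formula (K : Type*) [Field K] (L : Type*) [LieRing L] [LieAlgebra K L]
    (φ : L →ₗ⁅K⁆ L)
    (hbase : ∀ x y : L, ⁅φ x, y⁆ = -⁅x, φ y⁆) :
    ∀ (n : ℕ), ∀ x ∈ LieModule.lowerCentralSeries K L L n, ∀ y : L,
      ⁅φ x, y⁆ = -⁅x, ((φ : L →ₗ[K] L) ^ (2 ^ (n + 1) - 1)) y⁆ := by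
  have flip := cpa_pow_flip K L φ hbase
  have powlie := cpa_pow_map_lie K L φ
  intro n
  induction n with
  | zero =>
    intro x _ y
    have : ((φ : L →ₗ[K] L) ^ (2 ^ 1 - 1)) y = φ y := by norm_num
    rw [this]; exact hbase x y
  | succ n ih =>
    intro x hx y
    set f : L →ₗ[K] L := (φ : L →ₗ[K] L) with hf
    set m : ℕ := 2 ^ (n + 1) - 1 with hm
    have h1 : (1 : ℕ) ≤ 2 ^ (n + 1) := Nat.one_le_two_pow
    have hmodd : Odd m := by
      have h2 : (2 : ℕ) ^ (n + 1) = 2 * 2 ^ n := by ring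
      refine ⟨2 ^ n - 1, ?_⟩
      have h3 : (1 : ℕ) ≤ 2 ^ n := Nat.one_le_two_pow
      omega
    have hmM : 2 ^ (n + 1 + 1) - 1 = m + m + 1 := by
      have h2 : (2 : ℕ) ^ (n + 1 + 1) = 2 * 2 ^ (n + 1) := by ring
      omega
    have hcomp2 : ∀ y : L, (f ^ m) ((f ^ m) (φ y)) = (f ^ (m + m + 1)) y := by
      intro y
      have : φ y = f y := rfl
      rw [this, ← Module.End.mul_apply, ← Module.End.mul_apply, ← pow_add, ← pow_succ]
    have hcomp1 : ∀ y : L, (f ^ m) (φ ((f ^ m) y)) = (f ^ (m + m + 1)) y := by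
      intro y
      have : φ ((f ^ m) y) = (f ^ (m + 1)) y := by
        rw [pow_succ', Module.End.mul_apply]; rfl
      rw [this, ← Module.End.mul_apply, ← pow_add]
      norm_num [add_assoc]
    -- membership in the span of brackets
    have hx' : x ∈ Submodule.span K
        { z : L | ∃ a ∈ (⊤ : LieIdeal K L), ∃ b ∈ LieModule.lowerCentralSeries K L L n,
          ⁅a, b⁆ = z } := by
      rw [← LieSubmodule.lieIdeal_oper_eq_linear_span']
      rw [LieModule.lowerCentralSeries_succ] at hx
      exact hx
    revert y
    refine Submodule.span_induction ?_ ?_ ?_ ?_ hx'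
    · rintro z ⟨a, -, b, hb, rfl⟩ y
      -- first term : ⁅φ a, ⁅φ b, y⁆⁆ = -⁅a, ⁅b, f^(2m+1) y⁆⁆
      have t1 : ⁅φ a, ⁅φ b, y⁆⁆ = -⁅a, ⁅b, (f ^ (m + m + 1)) y⁆⁆ := by
        rw [ih b hb y, lie_neg, hbase]
        have : φ ⁅b, (f ^ m) y⁆ = ⁅φ b, φ ((f ^ m) y)⁆ := φ.map_lie b _
        rw [this, ih b hb (φ ((f ^ m) y)), hcomp1, lie_neg]
        simp
      -- second term : ⁅φ b, ⁅φ a, y⁆⁆ = -⁅b, ⁅a, f^(2m+1) y⁆⁆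
      have t2 : ⁅φ b, ⁅φ a, y⁆⁆ = -⁅b, ⁅a, (f ^ (m + m + 1)) y⁆⁆ := by
        rw [hbase a y, lie_neg, ih b hb ⁅a, φ y⁆, powlie, flip m a ((f ^ m) (φ y)),
          hcomp2, Odd.neg_one_pow hmodd]
        simp
      have hxz : φ ⁅a, b⁆ = ⁅φ a, φ b⁆ := φ.map_lie a b
      rw [hxz, lie_lie, t1, t2, hmM]
      rw [show (⁅⁅a, b⁆, (f ^ (m + m + 1)) y⁆ : L)
          = ⁅a, ⁅b, (f ^ (m + m + 1)) y⁆⁆ - ⁅b, ⁅a, (f ^ (m + m + 1)) y⁆⁆ from lie_lie a b _]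
      abel
    · intro y; simp
    · intro u v _ _ hu hv y
      rw [map_add φ, add_lie, hu y, hv y, add_lie]; abel
    · intro c u _ hu y
      rw [map_smul φ, smul_lie, hu y, smul_lie]; rw [smul_neg]

/-- For an inner CPA-structure `x·y = ⁅φ(x),y⁆` with `φ` a nilpotent Lie algebra endomorphism,
the intersection of the lower central series acts trivially: `g^∞ · g = 0`. -/
theorem cpa_nilpotent_phi_lcs_inf_acts_trivially
    (K : Type*) [Field K] (L : Type*) [LieRing L] [LieAlgebra K L]
    [FiniteDimensional K L]
    (φ : L →ₗ⁅K⁆ L) (hnil : IsNilpotent (φ : L →ₗ[K] L))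
    (hcomm : ∀ x y : L, ⁅φ x, y⁆ = ⁅φ y, x⁆)
    (hpost : ∀ x y z : L, ⁅φ ⁅x, y⁆, z⁆ = ⁅φ x, ⁅φ y, z⁆⁆ - ⁅φ y, ⁅φ x, z⁆⁆)
    (hder : ∀ x y z : L, ⁅φ x, ⁅y, z⁆⁆ = ⁅⁅φ x, y⁆, z⁆ + ⁅y, ⁅φ x, z⁆⁆) :
    ∀ x ∈ ⨅ i : ℕ, LieModule.lowerCentralSeries K L L i, ∀ y : L, ⁅φ x, y⁆ = 0 := by
  intro x hx y
  have hbase : ∀ x y : L, ⁅φ x, y⁆ = -⁅x, φ y⁆ := by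
    intro x y
    rw [hcomm, ← lie_skew]
  obtain ⟨k, hk⟩ := hnil
  -- pick n with k ≤ 2^(n+1) - 1
  have hkle : k ≤ 2 ^ (k + 1) - 1 := by
    have : k < 2 ^ k := Nat.lt_two_pow_self
    have h2 : (2 : ℕ) ^ (k + 1) = 2 * 2 ^ k := by ring
    omega
  have hzero : ((φ : L →ₗ[K] L) ^ (2 ^ (k + 1) - 1)) = 0 := by
    obtain ⟨d, hd⟩ := Nat.exists_eq_add_of_le hkle
    rw [hd, pow_add, hk, zero_mul]
  have hxk : x ∈ LieModule.lowerCentralSeries K L L k := by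
    have := (LieSubmodule.mem_iInf _).1 hx
    exact this k
  rw [cpa_lcs_formula K L φ hbase k x hxk y, hzero]
  simp
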